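/- Let V be a finite vertex set partitioned into a protected set P and a targeted set T, restrict attention to simple graphs on V of maximum degree at most d, and for k ≥ 2 define Path_k(G, v, S) to be the number of paths in G from the vertex v to vertices of S of length at most k. Then Path_k has targeted sensitivity at most (k−1)·d^{k−1}: for every pair of neighboring graphs G, G' (both of maximum degree at most d) with respect to (P,T), every t ∈ T, and every S ⊆ T, |Path_k(G,t,S) − Path_k(G',t,S)| ≤ (k−1)·d^{k−1}. -/

import Mathlib

/-- Two simple graphs on `V` are *neighboring* with respect to a protected set `P`
if one can be obtained from the other by arbitrarily rewiring the edges incident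
to a single protected vertex `v ∈ P`. -/
def Neighboring {V : Type*} (P : Set V) (G G' : SimpleGraph V) : Prop :=
  ∃ v ∈ P, ∀ a b : V, a ≠ v → b ≠ v → (G.Adj a b ↔ G'.Adj a b)

/-- A graph has maximum degree at most `d` if every vertex has at most `d` neighbors. -/
def MaxDegreeLE {V : Type*} (G : SimpleGraph V) (d : ℕ) : Prop :=
  ∀ v : V, Set.ncard {u : V | G.Adj v u} ≤ d

/-- `Path_k(G, v, S)` is the number of paths in `G` from the vertex `v` to
vertices of `S` of length at most `k` (a path is a walk with distinct vertices). -/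
noncomputable def PathK {V : Type*} (G : SimpleGraph V) (k : ℕ) (v : V) (S : Set V) : ℕ :=
  Nat.card {p : (u : V) × G.Walk v u // p.1 ∈ S ∧ p.2.IsPath ∧ p.2.length ≤ k}

open SimpleGraph


namespace PathKAux

private lemma nat_card_le_one {α : Type*} [Subsingleton α] : Nat.card α ≤ 1 := by
  rcases isEmpty_or_nonempty α with h | h
  · simp [Nat.card_of_isEmpty]
  · haveI : Unique α := uniqueOfSubsingleton h.some
    simp [Nat.card_unique]

private lemma nat_card_split {α : Type*} (A B : α → Prop) [Finite {x // A x}] :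
    Nat.card {x // A x} = Nat.card {x // A x ∧ B x} + Nat.card {x // A x ∧ ¬ B x} := by
  classical
  haveI : Finite {x // A x ∧ B x} :=
    Finite.of_injective (fun y => (⟨y.1, y.2.1⟩ : {x // A x}))
      (fun a b h => by cases a; cases b; simpa [Subtype.mk.injEq] using h)
  haveI : Finite {x // A x ∧ ¬ B x} :=
    Finite.of_injective (fun y => (⟨y.1, y.2.1⟩ : {x // A x}))
      (fun a b h => by cases a; cases b; simpa [Subtype.mk.injEq] using h)
  rw [← Nat.card_sum]
  apply Nat.card_congr
  calc {x // A x} ≃ {y : {x // A x} // B y.1} ⊕ {y : {x // A x} // ¬ B y.1} :=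
        (Equiv.sumCompl _).symm
    _ ≃ {x // A x ∧ B x} ⊕ {x // A x ∧ ¬ B x} :=
        Equiv.sumCongr (Equiv.subtypeSubtypeEquivSubtypeInter A B)
          (Equiv.subtypeSubtypeEquivSubtypeInter A (fun x => ¬ B x))

private lemma nat_card_sigma_le {ι : Type*} [Fintype ι] {A : ι → Type*} [∀ i, Finite (A i)]
    (c : ι → ℕ) (h : ∀ i, Nat.card (A i) ≤ c i) : Nat.card (Σ i, A i) ≤ ∑ i, c i := by
  classical
  letI : ∀ i, Fintype (A i) := fun i => Fintype.ofFinite _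
  rw [Nat.card_eq_fintype_card, Fintype.card_sigma]
  exact Finset.sum_le_sum fun i _ => by
    rw [← Nat.card_eq_fintype_card]; exact h i

section Graph

variable {V : Type*} [Fintype V] {G : SimpleGraph V}

private lemma finite_walkLen (t u : V) (n : ℕ) : Finite {p : G.Walk t u // p.length ≤ n} := by
  classical
  haveI : G.LocallyFinite := fun v => Fintype.ofFinite _
  exact Finite.of_injective
    (fun p => (⟨p.1, Nat.lt_succ_of_le p.2⟩ : {p : G.Walk t u // p.length < n + 1}))
    (fun a b h => by cases a; cases b; simpa [Subtype.mk.injEq] using h)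

private lemma finite_walkEq (t u : V) (n : ℕ) : Finite {p : G.Walk t u // p.length = n} := by
  classical
  haveI : G.LocallyFinite := fun v => Fintype.ofFinite _
  infer_instance

private lemma finite_cond {t : V} (n : ℕ) (Q : ((u : V) × G.Walk t u) → Prop)
    (hQ : ∀ p, Q p → p.2.length ≤ n) : Finite {p : (u : V) × G.Walk t u // Q p} := by
  haveI : ∀ u, Finite {p : G.Walk t u // p.length ≤ n} := fun u => finite_walkLen t u n
  apply Finite.of_injective
    (β := (u : V) × {p : G.Walk t u // p.length ≤ n})
    (fun p => ⟨p.1.1, ⟨p.1.2, hQ _ p.2⟩⟩)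
  rintro ⟨⟨u, p⟩, hp⟩ ⟨⟨u', p'⟩, hp'⟩ h
  simp only [Sigma.mk.inj_iff] at h
  obtain ⟨rfl, h2⟩ := h
  simp only [heq_eq_eq, Subtype.mk.injEq] at h2
  subst h2
  rfl

/-- Walks of length exactly `s+1` between two fixed vertices: at most `d^s` of them. -/
private lemma card_walk_len {d : ℕ} (hd : MaxDegreeLE G d) :
    ∀ (s : ℕ) (u w : V), Nat.card {p : G.Walk u w // p.length = s + 1} ≤ d ^ s := by
  intro s
  induction s with
  | zero =>
    intro u w
    haveI := finite_walkEq (G := G) u w 1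
    have hss : Subsingleton {p : G.Walk u w // p.length = 1} := by
      constructor
      rintro ⟨p, hp⟩ ⟨q, hq⟩
      apply Subtype.ext
      cases p with
      | nil => simp at hp
      | cons h p' =>
        cases q with
        | nil => simp at hq
        | cons h' q' =>
          simp only [Walk.length_cons] at hp hq
          have hp0 : p'.length = 0 := by omega
          have hq0 : q'.length = 0 := by omega
          obtain rfl := Walk.eq_of_length_eq_zero hp0
          obtain rfl := (Walk.nil_iff_length_eq.mpr hp0).eq_nil
          obtain rfl := Walk.eq_of_length_eq_zero hq0
          obtain rfl := (Walk.nil_iff_length_eq.mpr hq0).eq_nil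
          rfl
    simpa using nat_card_le_one (α := {p : G.Walk u w // p.length = 1})
  | succ s ih =>
    intro u w
    classical
    haveI := finite_walkEq (G := G) u w (s + 2)
    haveI : ∀ x : {x : V // G.Adj u x}, Finite {q : G.Walk x.1 w // q.length = s + 1} :=
      fun x => finite_walkEq x.1 w (s + 1)
    have hne : ∀ p : {p : G.Walk u w // p.length = s + 1 + 1}, ¬ p.1.Nil := by
      intro p
      rw [Walk.nil_iff_length_eq, p.2]; omega
    set f : {p : G.Walk u w // p.length = s + 1 + 1} →
        Σ x : {x : V // G.Adj u x}, {q : G.Walk x.1 w // q.length = s + 1} :=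
      fun p => ⟨⟨p.1.getVert 1, p.1.adj_snd (hne p)⟩, ⟨p.1.tail, by
        have h := Walk.length_tail_add_one (p := p.1) (hne p)
        omega⟩⟩ with hf
    set recover : (Σ x : {x : V // G.Adj u x}, {q : G.Walk x.1 w // q.length = s + 1}) →
        {p : G.Walk u w // p.length = s + 1 + 1} :=
      fun y => ⟨Walk.cons y.1.2 y.2.1, by simp [y.2.2]⟩ with hrec
    have hli : Function.LeftInverse recover f := by
      intro p
      apply Subtype.ext
      exact Walk.cons_tail_eq p.1 (hne p)
    refine (Nat.card_le_card_of_injective f hli.injective).trans ?_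
    refine (nat_card_sigma_le (ι := {x : V // G.Adj u x})
      (A := fun x => {q : G.Walk x.1 w // q.length = s + 1})
      (fun _ => d ^ s) (fun x => ih x.1 w)).trans ?_
    have hcard : Nat.card {x : V // G.Adj u x} = Set.ncard {x | G.Adj u x} :=
      Nat.card_coe_set_eq _
    have hcardle : Fintype.card {x : V // G.Adj u x} ≤ d := by
      rw [← Nat.card_eq_fintype_card, hcard]; exact hd u
    refine le_trans ?_ (le_of_eq (by ring : d * d ^ s = d ^ (s + 1)))
    rw [Finset.sum_const, smul_eq_mul, Finset.card_univ]
    exact Nat.mul_le_mul_right _ hcardle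

/-- Paths (allowing the trivial one) from `w` avoiding a vertex `z` adjacent to `w`,
of length at most `m`: at most `d^m` of them. -/
private lemma card_path_avoid {d : ℕ} (hd : MaxDegreeLE G d) :
    ∀ (m : ℕ) (w z : V), G.Adj z w →
      Nat.card {p : (u : V) × G.Walk w u //
        p.2.IsPath ∧ z ∉ p.2.support ∧ p.2.length ≤ m} ≤ d ^ m := by
  intro m
  induction m with
  | zero =>
    intro w z _
    haveI := finite_cond (G := G) (t := w) 0
      (fun p => p.2.IsPath ∧ z ∉ p.2.support ∧ p.2.length ≤ 0) (fun p hp => hp.2.2)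
    have hss : Subsingleton {p : (u : V) × G.Walk w u //
        p.2.IsPath ∧ z ∉ p.2.support ∧ p.2.length ≤ 0} := by
      constructor
      rintro ⟨⟨u, p⟩, hp⟩ ⟨⟨u', p'⟩, hp'⟩
      apply Subtype.ext
      have h0 : p.length = 0 := Nat.le_zero.mp hp.2.2
      have h0' : p'.length = 0 := Nat.le_zero.mp hp'.2.2
      obtain rfl := Walk.eq_of_length_eq_zero h0
      obtain rfl := (Walk.nil_iff_length_eq.mpr h0).eq_nil
      obtain rfl := Walk.eq_of_length_eq_zero h0'
      obtain rfl := (Walk.nil_iff_length_eq.mpr h0').eq_nil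
      rfl
    simpa using nat_card_le_one
      (α := {p : (u : V) × G.Walk w u // p.2.IsPath ∧ z ∉ p.2.support ∧ p.2.length ≤ 0})
  | succ m ih =>
    intro w z hzw
    classical
    have hd1 : 1 ≤ d := by
      have h1 : 0 < Set.ncard {x | G.Adj w x} := by
        rw [Set.ncard_pos (Set.toFinite _)]
        exact ⟨z, hzw.symm⟩
      exact h1.trans_le (hd w)
    haveI hfinA := finite_cond (G := G) (t := w) (m + 1)
      (fun p => p.2.IsPath ∧ z ∉ p.2.support ∧ p.2.length ≤ m + 1) (fun p hp => hp.2.2)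
    calc Nat.card {p : (u : V) × G.Walk w u //
            p.2.IsPath ∧ z ∉ p.2.support ∧ p.2.length ≤ m + 1}
        = Nat.card {p : (u : V) × G.Walk w u //
            (p.2.IsPath ∧ z ∉ p.2.support ∧ p.2.length ≤ m + 1) ∧ p.2.Nil}
          + Nat.card {p : (u : V) × G.Walk w u //
            (p.2.IsPath ∧ z ∉ p.2.support ∧ p.2.length ≤ m + 1) ∧ ¬ p.2.Nil} :=
          nat_card_split _ _
      _ ≤ 1 + (d - 1) * d ^ m := by
          gcongr
          · -- the nil part is a subsingleton
            have hss : Subsingleton {p : (u : V) × G.Walk w u //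
                (p.2.IsPath ∧ z ∉ p.2.support ∧ p.2.length ≤ m + 1) ∧ p.2.Nil} := by
              constructor
              rintro ⟨⟨u, p⟩, hp, hnil⟩ ⟨⟨u', p'⟩, hp', hnil'⟩
              apply Subtype.ext
              have h0 : p.length = 0 := Walk.nil_iff_length_eq.mp hnil
              have h0' : p'.length = 0 := Walk.nil_iff_length_eq.mp hnil'
              obtain rfl := Walk.eq_of_length_eq_zero h0
              obtain rfl := (Walk.nil_iff_length_eq.mpr h0).eq_nil
              obtain rfl := Walk.eq_of_length_eq_zero h0'
              obtain rfl := (Walk.nil_iff_length_eq.mpr h0').eq_nil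
              rfl
            exact nat_card_le_one
          · -- the non-nil part
            haveI : Finite {p : (u : V) × G.Walk w u //
                (p.2.IsPath ∧ z ∉ p.2.support ∧ p.2.length ≤ m + 1) ∧ ¬ p.2.Nil} :=
              finite_cond (G := G) (t := w) (m + 1) _ (fun p hp => hp.1.2.2)
            have hne : ∀ p : {p : (u : V) × G.Walk w u //
                (p.2.IsPath ∧ z ∉ p.2.support ∧ p.2.length ≤ m + 1) ∧ ¬ p.2.Nil},
                ¬ p.1.2.Nil := fun p => p.2.2
            have hxmem : ∀ p : {p : (u : V) × G.Walk w u //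
                (p.2.IsPath ∧ z ∉ p.2.support ∧ p.2.length ≤ m + 1) ∧ ¬ p.2.Nil},
                p.1.2.getVert 1 ∈ ({x | G.Adj w x} \ {z}) := by
              intro p
              refine ⟨p.1.2.adj_snd (hne p), ?_⟩
              simp only [Set.mem_singleton_iff]
              intro hazz
              have hmem : p.1.2.getVert 1 ∈ p.1.2.support := by
                rw [← Walk.cons_support_tail (hne p)]
                exact List.mem_cons_of_mem _ (Walk.start_mem_support _)
              rw [hazz] at hmem
              exact p.2.1.2.1 hmem
            have htail : ∀ p : {p : (u : V) × G.Walk w u //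
                (p.2.IsPath ∧ z ∉ p.2.support ∧ p.2.length ≤ m + 1) ∧ ¬ p.2.Nil},
                p.1.2.tail.IsPath ∧ w ∉ p.1.2.tail.support ∧ z ∉ p.1.2.tail.support ∧
                  p.1.2.tail.length ≤ m := by
              intro p
              refine ⟨p.2.1.1.tail, ?_, ?_, ?_⟩
              · have hnd : (w :: p.1.2.tail.support).Nodup := by
                  rw [Walk.cons_support_tail (hne p)]
                  exact p.2.1.1.support_nodup
                exact (List.nodup_cons.mp hnd).1
              · intro hz
                apply p.2.1.2.1
                rw [← Walk.cons_support_tail (hne p)]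
                exact List.mem_cons_of_mem _ hz
              · have h := Walk.length_tail_add_one (p := p.1.2) (hne p)
                have := p.2.1.2.2
                omega
            haveI hfinF : ∀ x : ↥({x | G.Adj w x} \ {z}),
                Finite {q : (u : V) × G.Walk x.1 u //
                  q.2.IsPath ∧ w ∉ q.2.support ∧ z ∉ q.2.support ∧ q.2.length ≤ m} :=
              fun x => finite_cond (G := G) m _ (fun q hq => hq.2.2.2)
            set f : {p : (u : V) × G.Walk w u //
                (p.2.IsPath ∧ z ∉ p.2.support ∧ p.2.length ≤ m + 1) ∧ ¬ p.2.Nil} →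
                Σ x : ↥({x | G.Adj w x} \ {z}),
                  {q : (u : V) × G.Walk x.1 u //
                    q.2.IsPath ∧ w ∉ q.2.support ∧ z ∉ q.2.support ∧ q.2.length ≤ m} :=
              fun p => ⟨⟨p.1.2.getVert 1, hxmem p⟩, ⟨⟨p.1.1, p.1.2.tail⟩, htail p⟩⟩ with hf
            have hrc : ∀ y : (Σ x : ↥({x | G.Adj w x} \ {z}),
                  {q : (u : V) × G.Walk x.1 u //
                    q.2.IsPath ∧ w ∉ q.2.support ∧ z ∉ q.2.support ∧ q.2.length ≤ m}),
                ((Walk.cons y.1.2.1 y.2.1.2).IsPath ∧ z ∉ (Walk.cons y.1.2.1 y.2.1.2).support ∧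
                  (Walk.cons y.1.2.1 y.2.1.2).length ≤ m + 1) ∧
                  ¬ (Walk.cons y.1.2.1 y.2.1.2).Nil := by
              intro y
              refine ⟨⟨?_, ?_, ?_⟩, Walk.not_nil_cons⟩
              · rw [Walk.cons_isPath_iff]
                exact ⟨y.2.2.1, y.2.2.2.1⟩
              · rw [Walk.support_cons]
                intro hz
                rcases List.mem_cons.mp hz with h | h
                · exact hzw.ne h
                · exact y.2.2.2.2.1 h
              · rw [Walk.length_cons]
                have := y.2.2.2.2.2
                omega
            set recover : (Σ x : ↥({x | G.Adj w x} \ {z}),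
                  {q : (u : V) × G.Walk x.1 u //
                    q.2.IsPath ∧ w ∉ q.2.support ∧ z ∉ q.2.support ∧ q.2.length ≤ m}) →
                {p : (u : V) × G.Walk w u //
                  (p.2.IsPath ∧ z ∉ p.2.support ∧ p.2.length ≤ m + 1) ∧ ¬ p.2.Nil} :=
              fun y => ⟨⟨y.2.1.1, Walk.cons y.1.2.1 y.2.1.2⟩, hrc y⟩ with hrec
            have hli : Function.LeftInverse recover f := by
              intro p
              apply Subtype.ext
              exact congrArg (Sigma.mk p.1.1) (Walk.cons_tail_eq p.1.2 (hne p))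
            refine (Nat.card_le_card_of_injective f hli.injective).trans ?_
            refine (nat_card_sigma_le (ι := ↥({x | G.Adj w x} \ {z}))
              (c := fun _ => d ^ m) (fun x => ?_)).trans ?_
            · -- each fiber: at most d^m by the inductive hypothesis
              haveI := finite_cond (G := G) (t := x.1) m
                (fun q => q.2.IsPath ∧ w ∉ q.2.support ∧ q.2.length ≤ m)
                (fun q hq => hq.2.2)
              have hsub : Function.Injective
                  (fun q : {q : (u : V) × G.Walk x.1 u //
                      q.2.IsPath ∧ w ∉ q.2.support ∧ z ∉ q.2.support ∧ q.2.length ≤ m} =>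
                    (⟨q.1, ⟨q.2.1, q.2.2.1, q.2.2.2.2⟩⟩ :
                      {q : (u : V) × G.Walk x.1 u //
                        q.2.IsPath ∧ w ∉ q.2.support ∧ q.2.length ≤ m})) := by
                intro a b h
                apply Subtype.ext
                simpa [Subtype.mk.injEq] using h
              refine (Nat.card_le_card_of_injective _ hsub).trans ?_
              exact ih x.1 w x.2.1
            · rw [Finset.sum_const, smul_eq_mul, Finset.card_univ]
              apply Nat.mul_le_mul_right
              have hcard : Nat.card ↥({x | G.Adj w x} \ {z}) = Set.ncard ({x | G.Adj w x} \ {z}) :=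
                Nat.card_coe_set_eq _
              rw [← Nat.card_eq_fintype_card, hcard]
              rw [Set.ncard_diff_singleton_of_mem (by exact hzw.symm)]
              exact Nat.sub_le_sub_right (hd w) 1
      _ ≤ d ^ (m + 1) := by
          have he : 1 ≤ d ^ m := Nat.one_le_pow _ _ hd1
          calc 1 + (d - 1) * d ^ m ≤ d ^ m + (d - 1) * d ^ m := by omega
            _ = (d - 1 + 1) * d ^ m := by ring
            _ = d * d ^ m := by rw [Nat.sub_add_cancel hd1]
            _ = d ^ (m + 1) := (pow_succ' d m).symm

/-- Nonempty paths from `v` of length at most `m`: at most `d^m` of them. -/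
private lemma card_path_from {d : ℕ} (hd : MaxDegreeLE G d) (m : ℕ) (v : V) :
    Nat.card {p : (u : V) × G.Walk v u //
      p.2.IsPath ∧ 1 ≤ p.2.length ∧ p.2.length ≤ m} ≤ d ^ m := by
  classical
  cases m with
  | zero =>
    haveI : IsEmpty {p : (u : V) × G.Walk v u //
        p.2.IsPath ∧ 1 ≤ p.2.length ∧ p.2.length ≤ 0} := by
      constructor
      rintro ⟨p, hp⟩
      omega
    have h0 : Nat.card {p : (u : V) × G.Walk v u //
        p.2.IsPath ∧ 1 ≤ p.2.length ∧ p.2.length ≤ 0} = 0 := Nat.card_of_isEmpty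
    rw [h0]
    exact Nat.zero_le _
  | succ m =>
    haveI := finite_cond (G := G) (t := v) (m + 1)
      (fun p => p.2.IsPath ∧ 1 ≤ p.2.length ∧ p.2.length ≤ m + 1) (fun p hp => hp.2.2)
    haveI hfinF : ∀ x : {x : V // G.Adj v x},
        Finite {q : (u : V) × G.Walk x.1 u //
          q.2.IsPath ∧ v ∉ q.2.support ∧ q.2.length ≤ m} :=
      fun x => finite_cond (G := G) m _ (fun q hq => hq.2.2)
    have hne : ∀ p : {p : (u : V) × G.Walk v u //
        p.2.IsPath ∧ 1 ≤ p.2.length ∧ p.2.length ≤ m + 1}, ¬ p.1.2.Nil := by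
      intro p
      rw [Walk.nil_iff_length_eq]
      have := p.2.2.1
      omega
    have htail : ∀ p : {p : (u : V) × G.Walk v u //
        p.2.IsPath ∧ 1 ≤ p.2.length ∧ p.2.length ≤ m + 1},
        p.1.2.tail.IsPath ∧ v ∉ p.1.2.tail.support ∧ p.1.2.tail.length ≤ m := by
      intro p
      refine ⟨p.2.1.tail, ?_, ?_⟩
      · have hnd : (v :: p.1.2.tail.support).Nodup := by
          rw [Walk.cons_support_tail (hne p)]
          exact p.2.1.support_nodup
        exact (List.nodup_cons.mp hnd).1
      · have h := Walk.length_tail_add_one (p := p.1.2) (hne p)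
        have := p.2.2.2
        omega
    set f : {p : (u : V) × G.Walk v u //
        p.2.IsPath ∧ 1 ≤ p.2.length ∧ p.2.length ≤ m + 1} →
        Σ x : {x : V // G.Adj v x},
          {q : (u : V) × G.Walk x.1 u //
            q.2.IsPath ∧ v ∉ q.2.support ∧ q.2.length ≤ m} :=
      fun p => ⟨⟨p.1.2.getVert 1, p.1.2.adj_snd (hne p)⟩,
        ⟨⟨p.1.1, p.1.2.tail⟩, htail p⟩⟩ with hf
    have hrc : ∀ y : (Σ x : {x : V // G.Adj v x},
          {q : (u : V) × G.Walk x.1 u //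
            q.2.IsPath ∧ v ∉ q.2.support ∧ q.2.length ≤ m}),
        (Walk.cons y.1.2 y.2.1.2).IsPath ∧ 1 ≤ (Walk.cons y.1.2 y.2.1.2).length ∧
          (Walk.cons y.1.2 y.2.1.2).length ≤ m + 1 := by
      intro y
      refine ⟨?_, ?_, ?_⟩
      · rw [Walk.cons_isPath_iff]
        exact ⟨y.2.2.1, y.2.2.2.1⟩
      · rw [Walk.length_cons]; omega
      · rw [Walk.length_cons]
        have := y.2.2.2.2
        omega
    set recover : (Σ x : {x : V // G.Adj v x},
          {q : (u : V) × G.Walk x.1 u //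
            q.2.IsPath ∧ v ∉ q.2.support ∧ q.2.length ≤ m}) →
        {p : (u : V) × G.Walk v u //
          p.2.IsPath ∧ 1 ≤ p.2.length ∧ p.2.length ≤ m + 1} :=
      fun y => ⟨⟨y.2.1.1, Walk.cons y.1.2 y.2.1.2⟩, hrc y⟩ with hrec
    have hli : Function.LeftInverse recover f := by
      intro p
      apply Subtype.ext
      exact congrArg (Sigma.mk p.1.1) (Walk.cons_tail_eq p.1.2 (hne p))
    refine (Nat.card_le_card_of_injective f hli.injective).trans ?_
    refine (nat_card_sigma_le (ι := {x : V // G.Adj v x})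
      (c := fun _ => d ^ m) (fun x => card_path_avoid hd m x.1 v x.2)).trans ?_
    · rw [Finset.sum_const, smul_eq_mul, Finset.card_univ]
      refine le_trans ?_ (le_of_eq (by ring : d * d ^ m = d ^ (m + 1)))
      apply Nat.mul_le_mul_right
      have hcard : Nat.card {x : V // G.Adj v x} = Set.ncard {x | G.Adj v x} :=
        Nat.card_coe_set_eq _
      rw [← Nat.card_eq_fintype_card, hcard]
      exact hd v

/-- Paths from `t` ending in `S`, of length at most `k`, passing through `v`
(with `v ≠ t` and `v ∉ S`): at most `(k-1)·d^(k-1)` of them. -/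
private lemma card_through {d k : ℕ} (hd : MaxDegreeLE G d) (hk : 2 ≤ k) {t v : V} {S : Set V}
    (hvt : v ≠ t) (hvS : v ∉ S) :
    Nat.card {p : (u : V) × G.Walk t u //
      (p.1 ∈ S ∧ p.2.IsPath ∧ p.2.length ≤ k) ∧ v ∈ p.2.support} ≤ (k - 1) * d ^ (k - 1) := by
  classical
  haveI := finite_cond (G := G) (t := t) k
    (fun p => (p.1 ∈ S ∧ p.2.IsPath ∧ p.2.length ≤ k) ∧ v ∈ p.2.support)
    (fun p hp => hp.1.2.2)
  haveI hfinQ : ∀ j : Fin (k - 1), Finite {q : G.Walk t v // q.length = j.1 + 1} :=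
    fun j => finite_walkEq t v (j.1 + 1)
  haveI hfinR : ∀ j : Fin (k - 1), Finite {r : (u : V) × G.Walk v u //
      r.2.IsPath ∧ 1 ≤ r.2.length ∧ r.2.length ≤ k - (j.1 + 1)} :=
    fun j => finite_cond (G := G) (k - (j.1 + 1)) _ (fun r hr => hr.2.2)
  have key : ∀ p : {p : (u : V) × G.Walk t u //
      (p.1 ∈ S ∧ p.2.IsPath ∧ p.2.length ≤ k) ∧ v ∈ p.2.support},
      1 ≤ (p.1.2.takeUntil v p.2.2).length ∧
      (p.1.2.takeUntil v p.2.2).length + (p.1.2.dropUntil v p.2.2).length = p.1.2.length ∧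
      1 ≤ (p.1.2.dropUntil v p.2.2).length ∧ p.1.2.length ≤ k := by
    intro p
    have hsum : (p.1.2.takeUntil v p.2.2).length + (p.1.2.dropUntil v p.2.2).length
        = p.1.2.length := by
      have := congrArg Walk.length (p.1.2.take_spec p.2.2)
      rwa [Walk.length_append] at this
    refine ⟨?_, hsum, ?_, p.2.1.2.2⟩
    · by_contra h
      have h0 : (p.1.2.takeUntil v p.2.2).length = 0 := by omega
      exact hvt (Walk.eq_of_length_eq_zero h0).symm
    · by_contra h
      have h0 : (p.1.2.dropUntil v p.2.2).length = 0 := by omega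
      exact hvS ((Walk.eq_of_length_eq_zero h0) ▸ p.2.1.1)
  set f : {p : (u : V) × G.Walk t u //
      (p.1 ∈ S ∧ p.2.IsPath ∧ p.2.length ≤ k) ∧ v ∈ p.2.support} →
      Σ j : Fin (k - 1), ({q : G.Walk t v // q.length = j.1 + 1} ×
        {r : (u : V) × G.Walk v u //
          r.2.IsPath ∧ 1 ≤ r.2.length ∧ r.2.length ≤ k - (j.1 + 1)}) :=
    fun p => ⟨⟨(p.1.2.takeUntil v p.2.2).length - 1, by
        show (p.1.2.takeUntil v p.2.2).length - 1 < k - 1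
        have := key p; omega⟩,
      ⟨⟨p.1.2.takeUntil v p.2.2, by
        show (p.1.2.takeUntil v p.2.2).length = (p.1.2.takeUntil v p.2.2).length - 1 + 1
        have := key p; omega⟩,
       ⟨⟨p.1.1, p.1.2.dropUntil v p.2.2⟩,
        p.2.1.2.1.dropUntil p.2.2, by
        show 1 ≤ (p.1.2.dropUntil v p.2.2).length
        have := key p; omega, by
        show (p.1.2.dropUntil v p.2.2).length ≤ k - ((p.1.2.takeUntil v p.2.2).length - 1 + 1)
        have := key p; omega⟩⟩⟩ with hf
  have hinj : Function.Injective f := by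
    intro a b h
    apply Subtype.ext
    have h3 : (⟨a.1.1, (a.1.2.takeUntil v a.2.2).append (a.1.2.dropUntil v a.2.2)⟩ :
          (u : V) × G.Walk t u)
        = ⟨b.1.1, (b.1.2.takeUntil v b.2.2).append (b.1.2.dropUntil v b.2.2)⟩ :=
      congrArg (fun y : (Σ j : Fin (k - 1), ({q : G.Walk t v // q.length = j.1 + 1} ×
        {r : (u : V) × G.Walk v u //
          r.2.IsPath ∧ 1 ≤ r.2.length ∧ r.2.length ≤ k - (j.1 + 1)})) =>
          (⟨y.2.2.1.1, y.2.1.1.append y.2.2.1.2⟩ : (u : V) × G.Walk t u)) h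
    rw [Walk.take_spec, Walk.take_spec] at h3
    exact h3
  refine (Nat.card_le_card_of_injective f hinj).trans ?_
  refine (nat_card_sigma_le (ι := Fin (k - 1))
    (c := fun _ => d ^ (k - 1)) (fun j => ?_)).trans ?_
  · rw [Nat.card_prod]
    have h1 : Nat.card {q : G.Walk t v // q.length = j.1 + 1} ≤ d ^ j.1 :=
      card_walk_len hd j.1 t v
    have h2 : Nat.card {r : (u : V) × G.Walk v u //
        r.2.IsPath ∧ 1 ≤ r.2.length ∧ r.2.length ≤ k - (j.1 + 1)} ≤ d ^ (k - (j.1 + 1)) :=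
      card_path_from hd (k - (j.1 + 1)) v
    refine (Nat.mul_le_mul h1 h2).trans (le_of_eq ?_)
    rw [← pow_add]
    congr 1
    have := j.2
    omega
  · rw [Finset.sum_const, smul_eq_mul, Finset.card_univ, Fintype.card_fin]

/-- Paths avoiding `v` are in bijection between two graphs that agree off `v`. -/
private lemma card_avoid_eq {G' : SimpleGraph V} {v : V}
    (hIff : ∀ a b : V, a ≠ v → b ≠ v → (G.Adj a b ↔ G'.Adj a b)) (t : V) (S : Set V) (k : ℕ) :
    Nat.card {p : (u : V) × G.Walk t u //
      (p.1 ∈ S ∧ p.2.IsPath ∧ p.2.length ≤ k) ∧ ¬ v ∈ p.2.support}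
    = Nat.card {p : (u : V) × G'.Walk t u //
      (p.1 ∈ S ∧ p.2.IsPath ∧ p.2.length ≤ k) ∧ ¬ v ∈ p.2.support} := by
  have hedge : ∀ {H H' : SimpleGraph V},
      (∀ a b : V, a ≠ v → b ≠ v → (H.Adj a b ↔ H'.Adj a b)) →
      ∀ {u : V} (p : H.Walk t u), v ∉ p.support → ∀ e ∈ p.edges, e ∈ H'.edgeSet := by
    intro H H' hiff u p hv e he
    revert he
    refine Sym2.ind (fun a b => ?_) e
    intro he
    have ha : a ∈ p.support := p.fst_mem_support_of_mem_edges he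
    have hb : b ∈ p.support := p.snd_mem_support_of_mem_edges he
    have hadj : H.Adj a b := p.adj_of_mem_edges he
    rw [SimpleGraph.mem_edgeSet]
    refine (hiff a b ?_ ?_).mp hadj
    · intro h; subst h; exact hv ha
    · intro h; subst h; exact hv hb
  have hIff' : ∀ a b : V, a ≠ v → b ≠ v → (G'.Adj a b ↔ G.Adj a b) :=
    fun a b ha hb => (hIff a b ha hb).symm
  apply Nat.card_congr
  refine ⟨fun p => ⟨⟨p.1.1, p.1.2.transfer G' (hedge hIff p.1.2 p.2.2)⟩,
      ⟨p.2.1.1, p.2.1.2.1.transfer _, by rw [Walk.length_transfer]; exact p.2.1.2.2⟩,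
      by rw [Walk.support_transfer]; exact p.2.2⟩,
    fun p => ⟨⟨p.1.1, p.1.2.transfer G (hedge hIff' p.1.2 p.2.2)⟩,
      ⟨p.2.1.1, p.2.1.2.1.transfer _, by rw [Walk.length_transfer]; exact p.2.1.2.2⟩,
      by rw [Walk.support_transfer]; exact p.2.2⟩, ?_, ?_⟩
  · intro p
    apply Subtype.ext
    refine congrArg (Sigma.mk p.1.1) ?_
    rw [Walk.transfer_transfer]
    exact Walk.transfer_self _
  · intro p
    apply Subtype.ext
    refine congrArg (Sigma.mk p.1.1) ?_
    rw [Walk.transfer_transfer]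
    exact Walk.transfer_self _

end Graph

end PathKAux

/-- For `k ≥ 2`, on graphs of maximum degree at most `d` the statistic `Path_k`
has targeted sensitivity at most `(k−1)·d^(k−1)`: for every partition of the
finite vertex set `V` into a protected set `P` and a targeted set `T`, every
pair of neighboring graphs `G, G'` (both of maximum degree at most `d`) with
respect to `(P, T)`, every `t ∈ T`, and every `S ⊆ T`,
`|Path_k(G,t,S) − Path_k(G',t,S)| ≤ (k−1)·d^(k−1)`. -/
theorem pathK_targeted_sensitivity {V : Type*} [Fintype V]
    (P T : Set V) (hUnion : P ∪ T = Set.univ) (hDisj : Disjoint P T)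
    (d k : ℕ) (hk : 2 ≤ k)
    (G G' : SimpleGraph V) (hdG : MaxDegreeLE G d) (hdG' : MaxDegreeLE G' d)
    (hN : Neighboring P G G')
    (t : V) (ht : t ∈ T) (S : Set V) (hS : S ⊆ T) :
    |(PathK G k t S : ℤ) - (PathK G' k t S : ℤ)| ≤ ((k - 1 : ℕ) : ℤ) * (d : ℤ) ^ (k - 1) := by
  classical
  obtain ⟨v, hvP, hIff⟩ := hN
  have hvT : v ∉ T := Set.disjoint_left.mp hDisj hvP
  have hvt : v ≠ t := fun h => hvT (h ▸ ht)
  have hvS : v ∉ S := fun h => hvT (hS h)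
  haveI : Finite {p : (u : V) × G.Walk t u // p.1 ∈ S ∧ p.2.IsPath ∧ p.2.length ≤ k} :=
    PathKAux.finite_cond (G := G) k _ (fun p hp => hp.2.2)
  haveI : Finite {p : (u : V) × G'.Walk t u // p.1 ∈ S ∧ p.2.IsPath ∧ p.2.length ≤ k} :=
    PathKAux.finite_cond (G := G') k _ (fun p hp => hp.2.2)
  have e1 : PathK G k t S
      = Nat.card {p : (u : V) × G.Walk t u //
          (p.1 ∈ S ∧ p.2.IsPath ∧ p.2.length ≤ k) ∧ v ∈ p.2.support}
      + Nat.card {p : (u : V) × G.Walk t u //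
          (p.1 ∈ S ∧ p.2.IsPath ∧ p.2.length ≤ k) ∧ ¬ v ∈ p.2.support} :=
    PathKAux.nat_card_split _ _
  have e2 : PathK G' k t S
      = Nat.card {p : (u : V) × G'.Walk t u //
          (p.1 ∈ S ∧ p.2.IsPath ∧ p.2.length ≤ k) ∧ v ∈ p.2.support}
      + Nat.card {p : (u : V) × G'.Walk t u //
          (p.1 ∈ S ∧ p.2.IsPath ∧ p.2.length ≤ k) ∧ ¬ v ∈ p.2.support} :=
    PathKAux.nat_card_split _ _
  have hAv : Nat.card {p : (u : V) × G.Walk t u //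
          (p.1 ∈ S ∧ p.2.IsPath ∧ p.2.length ≤ k) ∧ ¬ v ∈ p.2.support}
      = Nat.card {p : (u : V) × G'.Walk t u //
          (p.1 ∈ S ∧ p.2.IsPath ∧ p.2.length ≤ k) ∧ ¬ v ∈ p.2.support} :=
    PathKAux.card_avoid_eq hIff t S k
  have hT1 : Nat.card {p : (u : V) × G.Walk t u //
      (p.1 ∈ S ∧ p.2.IsPath ∧ p.2.length ≤ k) ∧ v ∈ p.2.support} ≤ (k - 1) * d ^ (k - 1) :=
    PathKAux.card_through hdG hk hvt hvS
  have hT2 : Nat.card {p : (u : V) × G'.Walk t u //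
      (p.1 ∈ S ∧ p.2.IsPath ∧ p.2.length ≤ k) ∧ v ∈ p.2.support} ≤ (k - 1) * d ^ (k - 1) :=
    PathKAux.card_through hdG' hk hvt hvS
  have hcast : ((k - 1 : ℕ) : ℤ) * (d : ℤ) ^ (k - 1) = (((k - 1) * d ^ (k - 1) : ℕ) : ℤ) := by
    push_cast; ring
  rw [e1, e2, hAv, hcast, abs_sub_le_iff]
  constructor <;> push_cast <;> omega
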